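/- Let L ∈ 𝐋^reg and M ∈ 𝐋 satisfy d_ABW(L,M)² < min_{t=1,…,T} λ_min((LᵀL)_{t,t}), where λ_min(A) denotes the smallest eigenvalue of the symmetric matrix A. Then the set of optimizers 𝐎*(L,M) is a singleton; in particular, there exists a unique geodesic between [L] and [M] in (𝐋/𝐎, d_ABW). -/

import Mathlib

open Matrix Filter Topology

/-- Square matrices of size `dT × dT`, indexed by blocks: index `(t, i)` is
row/column `i` within block `t`. -/
abbrev Mat (d T : ℕ) := Matrix (Fin T × Fin d) (Fin T × Fin d) ℝ

/-- The `t`-th diagonal `d × d` block of a `dT × dT` matrix. -/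
def blk {d T : ℕ} (A : Mat d T) (t : Fin T) : Matrix (Fin d) (Fin d) ℝ :=
  fun i j => A (t, i) (t, j)

/-- The `t`-th block column of a `dT × dT` matrix, a `dT × d` matrix. -/
def colBlk {d T : ℕ} (A : Mat d T) (t : Fin T) : Matrix (Fin T × Fin d) (Fin d) ℝ :=
  fun p j => A p (t, j)

/-- Membership in `𝐋`: block lower triangular matrices. -/
def memL {d T : ℕ} (A : Mat d T) : Prop :=
  ∀ (t s : Fin T) (i j : Fin d), t < s → A (t, i) (s, j) = 0

/-- Membership in `𝐎`: block diagonal matrices with orthogonal `d × d` diagonal blocks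
(equivalently: block diagonal and orthogonal). -/
def memO {d T : ℕ} (O : Mat d T) : Prop :=
  (∀ (t s : Fin T) (i j : Fin d), t ≠ s → O (t, i) (s, j) = 0) ∧ Oᵀ * O = 1

/-- The Frobenius norm of a real matrix. -/
noncomputable def frobNorm {m n : Type*} [Fintype m] [Fintype n] (A : Matrix m n ℝ) : ℝ :=
  Real.sqrt (∑ i, ∑ j, (A i j) ^ 2)

/-- The Frobenius inner product of two real matrices. -/
noncomputable def frobInner {m n : Type*} [Fintype m] [Fintype n] (A B : Matrix m n ℝ) : ℝ :=
  ∑ i, ∑ j, A i j * B i j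

/-- The adapted Bures–Wasserstein distance `d_ABW(L, M) = inf_{O ∈ 𝐎} ‖L - M O‖_F`. -/
noncomputable def dABW {d T : ℕ} (L M : Mat d T) : ℝ :=
  sInf {r : ℝ | ∃ O : Mat d T, memO O ∧ r = frobNorm (L - M * O)}

/-- The set `𝐎*(L, M)` of optimizers of `inf_{O ∈ 𝐎} ‖L - M O‖_F`. -/
noncomputable def OStar {d T : ℕ} (L M : Mat d T) : Set (Mat d T) :=
  {O | memO O ∧ frobNorm (L - M * O) = dABW L M}

/-- The set `𝐕(L) = {M P - L : M ∈ 𝐋, P ∈ 𝐎*(L, M)}`. -/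
noncomputable def VSet {d T : ℕ} (L : Mat d T) : Set (Mat d T) :=
  {V | ∃ M P : Mat d T, memL M ∧ P ∈ OStar L M ∧ V = M * P - L}

/-- The set `𝒱(L) = {V ∈ 𝐋 : (Vᵀ L)_{t,t} is symmetric for all t}`. -/
def calV {d T : ℕ} (L : Mat d T) : Set (Mat d T) :=
  {V | memL V ∧ ∀ t : Fin T, (blk (Vᵀ * L) t).IsSymm}

/-- The set `𝐋^reg = {L ∈ 𝐋 : (Lᵀ L)_{t,t} is positive definite for all t}`. -/
def LReg {d T : ℕ} : Set (Mat d T) :=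
  {L | memL L ∧ ∀ t : Fin T, (blk (Lᵀ * L) t).PosDef}

/-- The sum of the singular values of a real square matrix `A`,
i.e. the trace of the positive semidefinite square root of `Aᵀ A`. -/
noncomputable def svSum {n : ℕ} (A : Matrix (Fin n) (Fin n) ℝ) : ℝ :=
  (((Matrix.posSemidef_conjTranspose_mul_self A).1.eigenvectorUnitary : Matrix (Fin n) (Fin n) ℝ) *
    diagonal ((RCLike.ofReal : ℝ → ℝ) ∘ Real.sqrt ∘ (Matrix.posSemidef_conjTranspose_mul_self A).1.eigenvalues) *
    (star (Matrix.posSemidef_conjTranspose_mul_self A).1.eigenvectorUnitary :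
      Matrix (Fin n) (Fin n) ℝ)).trace

/-- The operator norm of a real matrix: the supremum of the euclidean norm `‖A x‖₂`
over the euclidean unit ball. -/
noncomputable def opNorm {m n : Type*} [Fintype m] [Fintype n] (A : Matrix m n ℝ) : ℝ :=
  sSup {r : ℝ | ∃ x : n → ℝ, (∑ j, (x j) ^ 2) ≤ 1 ∧ r = Real.sqrt (∑ i, (A.mulVec x i) ^ 2)}

-- ==== basic frobenius lemmas ====
section frob
variable {m n : Type*} [Fintype m] [Fintype n]

lemma frobNorm_nonneg (A : Matrix m n ℝ) : 0 ≤ frobNorm A := Real.sqrt_nonneg _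

lemma frobNorm_sq (A : Matrix m n ℝ) : frobNorm A ^ 2 = ∑ i, ∑ j, (A i j) ^ 2 :=
  Real.sq_sqrt (Finset.sum_nonneg fun i _ => Finset.sum_nonneg fun j _ => sq_nonneg _)

lemma sum_sq_eq_trace (A : Matrix m n ℝ) : ∑ i, ∑ j, (A i j) ^ 2 = (Aᵀ * A).trace := by
  rw [Matrix.trace, Finset.sum_comm]
  refine Finset.sum_congr rfl fun i _ => ?_
  simp [Matrix.mul_apply, Matrix.diag, sq]

lemma sum_mul_eq_trace (A B : Matrix m n ℝ) :
    ∑ i, ∑ j, A i j * B i j = (Aᵀ * B).trace := by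
  rw [Matrix.trace, Finset.sum_comm]
  refine Finset.sum_congr rfl fun i _ => ?_
  simp [Matrix.mul_apply, Matrix.diag]

end frob

-- ==== expansion ====
lemma expand_sq {d T : ℕ} (L M O : Mat d T) (hO : memO O) :
    frobNorm (L - M * O) ^ 2
      = frobNorm L ^ 2 + frobNorm M ^ 2 - 2 * (Lᵀ * M * O).trace := by
  have hOOt : O * Oᵀ = 1 := mul_eq_one_comm.mp hO.2
  have h : ∀ (i j : Fin T × Fin d),
      (L - M * O) i j ^ 2 = L i j ^ 2 - 2 * (L i j * (M * O) i j) + (M * O) i j ^ 2 :=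
    fun i j => by simp only [Matrix.sub_apply]; ring
  have e2 : ∑ i, ∑ j, L i j * (M * O) i j = (Lᵀ * M * O).trace := by
    rw [sum_mul_eq_trace, Matrix.mul_assoc]
  have e3 : ∑ i, ∑ j, ((M * O) i j) ^ 2 = ∑ i, ∑ j, (M i j) ^ 2 := by
    rw [sum_sq_eq_trace, sum_sq_eq_trace, Matrix.transpose_mul]
    calc (Oᵀ * Mᵀ * (M * O)).trace = (Oᵀ * (Mᵀ * M) * O).trace := by
          rw [Matrix.mul_assoc, Matrix.mul_assoc, Matrix.mul_assoc]
      _ = (O * (Oᵀ * (Mᵀ * M))).trace := Matrix.trace_mul_comm _ _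
      _ = (O * Oᵀ * (Mᵀ * M)).trace := by rw [Matrix.mul_assoc]
      _ = (Mᵀ * M).trace := by rw [hOOt, Matrix.one_mul]
  rw [frobNorm_sq, frobNorm_sq, frobNorm_sq]
  simp only [h, Finset.sum_add_distrib, Finset.sum_sub_distrib, ← Finset.mul_sum]
  rw [e2, e3]
  ring

-- ==== block diagonal infrastructure ====
def bdiag {d T : ℕ} (F : Fin T → Matrix (Fin d) (Fin d) ℝ) : Mat d T :=
  Matrix.of fun p q => if p.1 = q.1 then F p.1 p.2 q.2 else 0

variable {d T : ℕ}

@[simp] lemma bdiag_apply (F : Fin T → Matrix (Fin d) (Fin d) ℝ) (p q : Fin T × Fin d) :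
    bdiag F p q = if p.1 = q.1 then F p.1 p.2 q.2 else 0 := rfl

@[simp] lemma blk_apply (A : Mat d T) (t : Fin T) (i j : Fin d) :
    blk A t i j = A (t, i) (t, j) := rfl

lemma memO.blk_orth {O : Mat d T} (hO : memO O) (t : Fin T) :
    (blk O t)ᵀ * blk O t = 1 := by
  ext i j
  have h2 := congrFun (congrFun hO.2 (t, i)) (t, j)
  rw [Matrix.mul_apply, Fintype.sum_prod_type] at h2
  rw [Finset.sum_eq_single_of_mem t (Finset.mem_univ t) (fun u _ hu =>
    Finset.sum_eq_zero fun k _ => by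
      rw [Matrix.transpose_apply, hO.1 u t k i hu, zero_mul])] at h2
  rw [Matrix.mul_apply]
  simp only [Matrix.transpose_apply, blk_apply]
  simp only [Matrix.transpose_apply] at h2
  rw [h2]
  by_cases hij : i = j <;> simp [Matrix.one_apply, hij, Prod.ext_iff]

lemma memO.eq_bdiag {O : Mat d T} (hO : memO O) : O = bdiag (fun t => blk O t) := by
  ext ⟨t, i⟩ ⟨s, j⟩
  by_cases hts : t = s
  · subst hts; simp
  · simp [hts, hO.1 t s i j hts]

lemma blk_mul_bdiag (A : Mat d T) (F : Fin T → Matrix (Fin d) (Fin d) ℝ) (t : Fin T) :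
    blk (A * bdiag F) t = blk A t * F t := by
  ext i j
  rw [blk_apply, Matrix.mul_apply, Matrix.mul_apply, Fintype.sum_prod_type]
  rw [Finset.sum_eq_single_of_mem t (Finset.mem_univ t) (fun u _ hu =>
    Finset.sum_eq_zero fun k _ => by simp [hu])]
  simp

lemma trace_eq_sum_blk (A : Mat d T) : A.trace = ∑ t, (blk A t).trace := by
  rw [Matrix.trace, Fintype.sum_prod_type]
  rfl

lemma trace_mul_bdiag (A : Mat d T) (F : Fin T → Matrix (Fin d) (Fin d) ℝ) :
    (A * bdiag F).trace = ∑ t, (blk A t * F t).trace := by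
  rw [trace_eq_sum_blk]
  exact Finset.sum_congr rfl fun t _ => by rw [blk_mul_bdiag]

lemma memO_bdiag (F : Fin T → Matrix (Fin d) (Fin d) ℝ) (hF : ∀ t, (F t)ᵀ * F t = 1) :
    memO (bdiag F) := by
  constructor
  · intro t s i j hts
    simp [hts]
  · ext ⟨t, i⟩ ⟨s, j⟩
    rw [Matrix.mul_apply, Fintype.sum_prod_type]
    by_cases hts : t = s
    · subst hts
      rw [Finset.sum_eq_single_of_mem t (Finset.mem_univ t) (fun u _ hu =>
        Finset.sum_eq_zero fun k _ => by simp [hu])]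
      have hFt := congrFun (congrFun (hF t) i) j
      rw [Matrix.mul_apply] at hFt
      simp only [Matrix.transpose_apply] at hFt
      simp only [Matrix.transpose_apply, bdiag_apply, eq_self_iff_true, if_true]
      rw [hFt]
      by_cases hij : i = j <;> simp [Matrix.one_apply, hij, Prod.ext_iff]
    · rw [Finset.sum_eq_zero fun u _ => Finset.sum_eq_zero fun k _ => ?_]
      · exact (Matrix.one_apply_ne (by simp [Prod.ext_iff, hts])).symm
      · by_cases hu : u = t
        · subst hu; simp [hts]
        · simp [hu]

lemma memO_one : memO (1 : Mat d T) := by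
  refine ⟨fun t s i j hts => ?_, by simp⟩
  exact Matrix.one_apply_ne (by simp [Prod.ext_iff, hts])

lemma memO.mul {P Q : Mat d T} (hP : memO P) (hQ : memO Q) : memO (P * Q) := by
  constructor
  · intro t s i j hts
    rw [Matrix.mul_apply, Fintype.sum_prod_type]
    refine Finset.sum_eq_zero fun u _ => Finset.sum_eq_zero fun k _ => ?_
    by_cases hu : t = u
    · subst hu; rw [hQ.1 t s k j hts, mul_zero]
    · rw [hP.1 t u i k hu, zero_mul]
  · rw [Matrix.transpose_mul, Matrix.mul_assoc, ← Matrix.mul_assoc Pᵀ, hP.2, Matrix.one_mul, hQ.2]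

variable {n : ℕ}

def givensM (i j : Fin n) (c s : ℝ) : Matrix (Fin n) (Fin n) ℝ :=
  Matrix.of fun k l =>
    if k = i then (if l = i then c else if l = j then -s else 0)
    else if k = j then (if l = i then s else if l = j then c else 0)
    else if k = l then 1 else 0

lemma sum_split {i j : Fin n} (hij : i ≠ j) (f : Fin n → ℝ) :
    ∑ k, f k = f i + f j + ∑ k ∈ (Finset.univ.erase i).erase j, f k := by
  rw [← Finset.sum_erase_add _ _ (Finset.mem_univ i),
    ← Finset.sum_erase_add _ _ (Finset.mem_erase.mpr ⟨Ne.symm hij, Finset.mem_univ j⟩)]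
  ring

lemma givens_orth {i j : Fin n} (hij : i ≠ j) {c s : ℝ} (h : c ^ 2 + s ^ 2 = 1) :
    (givensM i j c s)ᵀ * givensM i j c s = 1 := by
  ext a b
  rw [Matrix.mul_apply]
  simp only [Matrix.transpose_apply]
  rw [sum_split hij]
  have hE : ∑ k ∈ (Finset.univ.erase i).erase j, givensM i j c s k a * givensM i j c s k b
      = ∑ k ∈ (Finset.univ.erase i).erase j,
          if k = a then (if a = b then (1:ℝ) else 0) else 0 := by
    refine Finset.sum_congr rfl fun k hk => ?_
    have hki : k ≠ i := Finset.ne_of_mem_erase (Finset.mem_of_mem_erase hk)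
    have hkj : k ≠ j := Finset.ne_of_mem_erase hk
    simp only [givensM, Matrix.of_apply, if_neg hki, if_neg hkj]
    by_cases hka : k = a
    · subst hka
      by_cases hab : k = b <;> simp [hab]
    · simp [hka]
  rw [hE, Finset.sum_ite_eq' ((Finset.univ.erase i).erase j) a]
  by_cases hai : a = i <;> by_cases haj : a = j <;> by_cases hbi : b = i <;> by_cases hbj : b = j
  all_goals (try (exact absurd (hai ▸ haj ▸ rfl : (i:Fin n) = j) hij))
  all_goals (try (exact absurd (hbi ▸ hbj ▸ rfl : (i:Fin n) = j) hij))
  all_goals subst_vars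
  all_goals simp_all [givensM, Matrix.one_apply, Finset.mem_erase, hij, Ne.symm hij]
  all_goals (try (rw [if_neg (fun hh => (by assumption : ¬b = a) hh.symm)]))
  all_goals (try (exact fun hh => ‹¬b = a› hh.symm))
  all_goals nlinarith [h]

lemma trace_mul_givens (S : Matrix (Fin n) (Fin n) ℝ) {i j : Fin n} (hij : i ≠ j) (c s : ℝ) :
    (S * givensM i j c s).trace
      = c * (S i i + S j j) + s * (S i j - S j i)
        + ∑ k ∈ (Finset.univ.erase i).erase j, S k k := by
  rw [Matrix.trace]
  have h0 : ∑ a, (S * givensM i j c s).diag a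
      = ∑ k, ∑ a, S a k * givensM i j c s k a := by
    simp only [Matrix.diag_apply, Matrix.mul_apply]
    rw [Finset.sum_comm]
  rw [h0, sum_split hij]
  have hi : ∑ a, S a i * givensM i j c s i a = c * S i i + (-s) * S j i := by
    rw [sum_split hij (f := fun a => S a i * givensM i j c s i a)]
    rw [Finset.sum_eq_zero fun k hk => ?_]
    · simp [givensM, hij, Ne.symm hij]
      ring
    · have hki : k ≠ i := Finset.ne_of_mem_erase (Finset.mem_of_mem_erase hk)
      have hkj : k ≠ j := Finset.ne_of_mem_erase hk
      simp [givensM, hki, hkj, Ne.symm hki, Ne.symm hkj]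
  have hj : ∑ a, S a j * givensM i j c s j a = s * S i j + c * S j j := by
    rw [sum_split hij (f := fun a => S a j * givensM i j c s j a)]
    rw [Finset.sum_eq_zero fun k hk => ?_]
    · simp [givensM, hij, Ne.symm hij]
      ring
    · have hki : k ≠ i := Finset.ne_of_mem_erase (Finset.mem_of_mem_erase hk)
      have hkj : k ≠ j := Finset.ne_of_mem_erase hk
      simp [givensM, hki, hkj, Ne.symm hki, Ne.symm hkj]
  have hrest : ∑ k ∈ (Finset.univ.erase i).erase j, ∑ a, S a k * givensM i j c s k a
      = ∑ k ∈ (Finset.univ.erase i).erase j, S k k := by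
    refine Finset.sum_congr rfl fun k hk => ?_
    have hki : k ≠ i := Finset.ne_of_mem_erase (Finset.mem_of_mem_erase hk)
    have hkj : k ≠ j := Finset.ne_of_mem_erase hk
    have : ∀ a, S a k * givensM i j c s k a = if k = a then S a k else 0 := by
      intro a
      simp only [givensM, Matrix.of_apply, if_neg hki, if_neg hkj]
      by_cases hka : k = a <;> simp [hka]
    simp only [this]
    rw [Finset.sum_ite_eq Finset.univ k (fun a => S a k)]
    simp
  rw [hi, hj, hrest]
  ring

lemma trace_split (S : Matrix (Fin n) (Fin n) ℝ) {i j : Fin n} (hij : i ≠ j) :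
    S.trace = S i i + S j j + ∑ k ∈ (Finset.univ.erase i).erase j, S k k := by
  rw [Matrix.trace, sum_split hij]
  rfl

lemma max_sym {n : ℕ} (S : Matrix (Fin n) (Fin n) ℝ)
    (hmax : ∀ R : Matrix (Fin n) (Fin n) ℝ, Rᵀ * R = 1 → (S * R).trace ≤ S.trace) :
    Sᵀ = S := by
  ext i j
  rw [Matrix.transpose_apply]
  rcases eq_or_ne j i with rfl | hij
  · rfl
  -- show S j i = S i j using rotations in the (j,i) plane
  set a := S j j + S i i with ha
  set β := S j i - S i j with hβ
  have key : ∀ c s : ℝ, c ^ 2 + s ^ 2 = 1 → c * a + s * β ≤ a := by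
    intro c s hcs
    have h1 := hmax _ (givens_orth hij hcs)
    rw [trace_mul_givens S hij c s, trace_split S hij] at h1
    rw [ha, hβ]
    linarith
  have hβ0 : β = 0 := by
    set r := Real.sqrt (a ^ 2 + β ^ 2) with hr
    have hrnn : 0 ≤ a ^ 2 + β ^ 2 := by positivity
    have hr2 : r ^ 2 = a ^ 2 + β ^ 2 := Real.sq_sqrt hrnn
    rcases eq_or_ne r 0 with h0 | h0
    · nlinarith [sq_nonneg a, sq_nonneg β]
    · have hcs : (a / r) ^ 2 + (β / r) ^ 2 = 1 := by
        field_simp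
        linarith [hr2]
      have h2 := key (a / r) (β / r) hcs
      have hra : a / r * a + β / r * β = r := by
        field_simp
        nlinarith [hr2]
      have har : a ≤ r := by
        have h3 : a ≤ |a| := le_abs_self a
        have h4 : |a| = Real.sqrt (a ^ 2) := (Real.sqrt_sq_eq_abs a).symm
        have h5 : Real.sqrt (a ^ 2) ≤ r := Real.sqrt_le_sqrt (by nlinarith [sq_nonneg β])
        linarith
      have : r = a := le_antisymm (by linarith [hra ▸ h2]) har
      rw [this] at hr2
      nlinarith [hr2]
  linarith [hβ0, sub_eq_zero.mp hβ0]

lemma max_psd {n : ℕ} (S : Matrix (Fin n) (Fin n) ℝ)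
    (hmax : ∀ R : Matrix (Fin n) (Fin n) ℝ, Rᵀ * R = 1 → (S * R).trace ≤ S.trace) :
    ∀ v : Fin n → ℝ, 0 ≤ v ⬝ᵥ (S *ᵥ v) := by
  intro v
  rcases eq_or_ne v 0 with rfl | hv
  · simp
  have hc : 0 < v ⬝ᵥ v := by
    have h1 : v ⬝ᵥ v ≠ 0 := fun h => hv ((dotProduct_self_eq_zero).mp h)
    have h2 : 0 ≤ v ⬝ᵥ v := Finset.sum_nonneg fun i _ => mul_self_nonneg _
    exact lt_of_le_of_ne h2 (Ne.symm h1)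
  set cv := v ⬝ᵥ v with hcv
  set N : Matrix (Fin n) (Fin n) ℝ := vecMulVec v v with hN
  set t : ℝ := 2 / cv with ht
  set H : Matrix (Fin n) (Fin n) ℝ := 1 - t • N with hH
  have hNt : Nᵀ = N := by
    ext i j; simp [hN, vecMulVec_apply, mul_comm]
  have hNN : N * N = cv • N := by
    ext i j
    simp only [Matrix.mul_apply, Matrix.smul_apply, hN, vecMulVec_apply, smul_eq_mul]
    rw [hcv, dotProduct]
    rw [Finset.sum_mul]
    exact Finset.sum_congr rfl fun k _ => by ring
  have hHo : Hᵀ * H = 1 := by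
    have hHt : Hᵀ = H := by
      rw [hH, Matrix.transpose_sub, Matrix.transpose_one, Matrix.transpose_smul, hNt]
    rw [hHt, hH]
    have : (1 - t • N) * (1 - t • N) = 1 - (2 * t) • N + (t * t) • (N * N) := by
      rw [mul_sub, Matrix.mul_one, sub_mul, Matrix.one_mul, Matrix.mul_smul, Matrix.smul_mul,
        smul_smul, two_mul, add_smul]
      abel
    rw [this, hNN, smul_smul]
    have : t * t * cv = 2 * t := by
      rw [ht]; field_simp
    rw [this]
    abel
  have htr : (S * H).trace = S.trace - t * (v ⬝ᵥ (S *ᵥ v)) := by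
    rw [hH, mul_sub, Matrix.mul_one, Matrix.mul_smul, Matrix.trace_sub, Matrix.trace_smul,
      smul_eq_mul]
    congr 1
    congr 1
    rw [Matrix.trace]
    simp only [Matrix.diag_apply, Matrix.mul_apply, hN, vecMulVec_apply]
    rw [dotProduct]
    refine Finset.sum_congr rfl fun a _ => ?_
    simp only [Matrix.mulVec, dotProduct, Finset.mul_sum]
    exact Finset.sum_congr rfl fun b _ => by ring
  have := hmax H hHo
  rw [htr] at this
  have h3 : 0 ≤ t * (v ⬝ᵥ (S *ᵥ v)) := by linarith
  have h4 : 0 < t := by positivity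
  nlinarith

lemma sum_sq_eq_trace' {m k : Type*} [Fintype m] [Fintype k] (A : Matrix m k ℝ) :
    ∑ i, ∑ j, (A i j) ^ 2 = (Aᵀ * A).trace := by
  rw [Matrix.trace, Finset.sum_comm]
  refine Finset.sum_congr rfl fun i _ => ?_
  simp [Matrix.mul_apply, Matrix.diag, sq]

open scoped MatrixOrder in
lemma eq_one_of_trace_eq {n : ℕ} {S R : Matrix (Fin n) (Fin n) ℝ}
    (hS : S.PosSemidef) (hdet : IsUnit S.det) (hR : Rᵀ * R = 1)
    (htr : (S * R).trace = S.trace) : R = 1 := by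
  have hRRt : R * Rᵀ = 1 := mul_eq_one_comm.mp hR
  set C := CFC.sqrt S with hC
  have hC2 : C * C = S := CFC.sqrt_mul_sqrt_self S (Matrix.nonneg_iff_posSemidef.mpr hS)
  have hCt : Cᵀ = C := by
    have := (Matrix.nonneg_iff_posSemidef.mp (CFC.sqrt_nonneg S)).1
    rwa [Matrix.IsHermitian, conjTranspose_eq_transpose_of_trivial] at this
  have hSt : Sᵀ = S := by
    have := hS.1
    rwa [Matrix.IsHermitian, conjTranspose_eq_transpose_of_trivial] at this
  have key : ((C - C * R)ᵀ * (C - C * R)).trace = 0 := by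
    have hexp : (C - C * R)ᵀ * (C - C * R)
        = S - S * R - Rᵀ * S + Rᵀ * (S * R) := by
      rw [Matrix.transpose_sub, Matrix.transpose_mul, hCt, sub_mul, mul_sub, mul_sub,
        hC2, Matrix.mul_assoc, Matrix.mul_assoc, ← Matrix.mul_assoc C C R, hC2]
      abel
    rw [hexp, Matrix.trace_add, Matrix.trace_sub, Matrix.trace_sub]
    have h1 : (Rᵀ * S).trace = (S * R).trace := by
      rw [← Matrix.trace_transpose (Rᵀ * S), Matrix.transpose_mul, Matrix.transpose_transpose,
        hSt]
    have h2 : (Rᵀ * (S * R)).trace = S.trace := by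
      rw [Matrix.trace_mul_comm, Matrix.mul_assoc, hRRt, Matrix.mul_one]
    rw [h1, h2, htr]
    ring
  have hzero : C - C * R = 0 := by
    rw [← sum_sq_eq_trace'] at key
    ext i j
    have hnn : ∀ i ∈ Finset.univ, (0:ℝ) ≤ ∑ j, ((C - C * R) i j) ^ 2 :=
      fun i _ => Finset.sum_nonneg fun j _ => sq_nonneg _
    have h3 := (Finset.sum_eq_zero_iff_of_nonneg hnn).mp key i (Finset.mem_univ i)
    have h4 := (Finset.sum_eq_zero_iff_of_nonneg (fun j _ => sq_nonneg _)).mp h3 j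
      (Finset.mem_univ j)
    have := pow_eq_zero_iff (n := 2) (by norm_num) |>.mp h4
    simpa using this
  have hCR : C * R = C := by
    have := sub_eq_zero.mp hzero
    exact this.symm
  have hdetC : IsUnit C.det := by
    have : C.det * C.det = S.det := by rw [← Matrix.det_mul, hC2]
    exact isUnit_of_mul_isUnit_left (this ▸ hdet)
  have h1 := Matrix.nonsing_inv_mul C hdetC
  calc R = (C⁻¹ * C) * R := by rw [h1, Matrix.one_mul]
  _ = 1 := by rw [Matrix.mul_assoc, hCR, h1]

lemma rayleigh {n : ℕ} (S : Matrix (Fin n) (Fin n) ℝ) (hS : S.IsHermitian) (c : ℝ)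
    (hc : ∀ μ : ℝ, (∃ x : Fin n → ℝ, x ≠ 0 ∧ S *ᵥ x = μ • x) → c < μ)
    (x : Fin n → ℝ) (hx : x ≠ 0) : c * (x ⬝ᵥ x) < x ⬝ᵥ (S *ᵥ x) := by
  classical
  set U : Matrix (Fin n) (Fin n) ℝ := (hS.eigenvectorUnitary : Matrix (Fin n) (Fin n) ℝ) with hU
  have hU1 : star U * U = 1 := Unitary.star_mul_self_of_mem hS.eigenvectorUnitary.2
  have hU2 : U * star U = 1 := Unitary.mul_star_self_of_mem hS.eigenvectorUnitary.2
  set y := star U *ᵥ x with hy'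
  have hy : U *ᵥ y = x := by rw [hy', Matrix.mulVec_mulVec, hU2, Matrix.one_mulVec]
  have hyne : y ≠ 0 := fun h => hx (by rw [← hy, h, Matrix.mulVec_zero])
  have hstarU : star U = Uᵀ := by
    rw [Matrix.star_eq_conjTranspose, conjTranspose_eq_transpose_of_trivial]
  have hxU : ∀ w : Fin n → ℝ, x ⬝ᵥ (U *ᵥ w) = y ⬝ᵥ w := by
    intro w
    rw [Matrix.dotProduct_mulVec, hy', hstarU, Matrix.mulVec_transpose]
  have hdiag : ∀ z : Fin n → ℝ,
      z ⬝ᵥ ((Matrix.diagonal (RCLike.ofReal ∘ hS.eigenvalues) : Matrix (Fin n) (Fin n) ℝ) *ᵥ z)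
        = ∑ i, hS.eigenvalues i * (z i) ^ 2 := by
    intro z
    simp only [dotProduct, Matrix.mulVec_diagonal]
    refine Finset.sum_congr rfl fun i _ => ?_
    simp [sq]
    ring
  have h1 : x ⬝ᵥ (S *ᵥ x) = ∑ i, hS.eigenvalues i * (y i) ^ 2 := by
    conv_lhs => rw [hS.spectral_theorem, Unitary.conjStarAlgAut_apply, ← hU]
    rw [← Matrix.mulVec_mulVec, ← Matrix.mulVec_mulVec, hxU, ← hy', hdiag]
  have h2 : x ⬝ᵥ x = ∑ i, (y i) ^ 2 := by
    conv_lhs => rw [← hy]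
    rw [Matrix.dotProduct_mulVec (U *ᵥ y) U y, ← Matrix.mulVec_transpose U (U *ᵥ y),
      Matrix.mulVec_mulVec, ← hstarU, hU1, Matrix.one_mulVec]
    simp [dotProduct, sq]
  have hμ : ∀ i, c < hS.eigenvalues i := by
    intro i
    refine hc _ ⟨⇑(hS.eigenvectorBasis i), ?_, hS.mulVec_eigenvectorBasis i⟩
    intro h0
    exact hS.eigenvectorBasis.orthonormal.ne_zero i (by ext k; exact congrFun h0 k)
  rw [h1, h2, Finset.mul_sum]
  obtain ⟨i0, hi0⟩ := Function.ne_iff.mp hyne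
  refine Finset.sum_lt_sum (fun i _ => ?_) ⟨i0, Finset.mem_univ i0, ?_⟩
  · exact mul_le_mul_of_nonneg_right (hμ i).le (sq_nonneg _)
  · have : 0 < (y i0) ^ 2 := lt_of_le_of_ne (sq_nonneg _) (Ne.symm (pow_ne_zero 2 hi0))
    exact mul_lt_mul_of_pos_right (hμ i0) this

section existence
variable {d T : ℕ} (L M : Mat d T)

lemma dABW_le {O : Mat d T} (hO : memO O) : dABW L M ≤ frobNorm (L - M * O) :=
  csInf_le ⟨0, fun r ⟨O', _, hr⟩ => hr ▸ Real.sqrt_nonneg _⟩ ⟨O, hO, rfl⟩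

lemma exists_opt : ∃ O₀ : Mat d T, memO O₀ ∧ frobNorm (L - M * O₀) = dABW L M := by
  classical
  set f : Mat d T → ℝ := fun O => frobNorm (L - M * O) with hf
  have hfc : Continuous f := by
    apply Real.continuous_sqrt.comp
    apply continuous_finset_sum _ fun i _ => ?_
    apply continuous_finset_sum _ fun j _ => ?_
    exact ((continuous_const.sub (continuous_const.matrix_mul continuous_id)).matrix_elem i j).pow 2
  set S : Set (Mat d T) := {O | memO O} with hS
  have hSne : S.Nonempty := ⟨1, memO_one⟩
  have hclosed : IsClosed S := by
    have : S = (⋂ t, ⋂ s, ⋂ i, ⋂ j, {O : Mat d T | t ≠ s → O (t, i) (s, j) = 0})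
        ∩ {O : Mat d T | Oᵀ * O = 1} := by
      ext O
      simp only [Set.mem_inter_iff, Set.mem_iInter, Set.mem_setOf_eq, hS]
      exact ⟨fun h => ⟨fun t s i j hts => h.1 t s i j hts, h.2⟩,
        fun h => ⟨fun t s i j hts => h.1 t s i j hts, h.2⟩⟩
    rw [this]
    refine IsClosed.inter ?_ (isClosed_eq
      (continuous_id.matrix_transpose.matrix_mul continuous_id) continuous_const)
    refine isClosed_iInter fun t => isClosed_iInter fun s => isClosed_iInter fun i =>
      isClosed_iInter fun j => ?_
    by_cases hts : t = s
    · have : {O : Mat d T | t ≠ s → O (t, i) (s, j) = 0} = Set.univ := by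
        ext O; simp [hts]
      rw [this]; exact isClosed_univ
    · simp only [ne_eq, hts, not_false_eq_true, true_implies]
      exact isClosed_eq (continuous_id.matrix_elem _ _) continuous_const
  have hsub : S ⊆ {O : Mat d T | ∀ p q, O p q ∈ Set.Icc (-1:ℝ) 1} := by
    intro O hO p q
    have h2 := congrFun (congrFun hO.2 q) q
    rw [Matrix.mul_apply] at h2
    have hsum : ∑ p', O p' q * O p' q = 1 := by
      rw [show (1 : Mat d T) q q = 1 from Matrix.one_apply_eq q] at h2
      exact h2
    have hle : O p q * O p q ≤ 1 := by
      rw [← hsum]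
      exact Finset.single_le_sum (f := fun p' => O p' q * O p' q)
        (fun p' _ => mul_self_nonneg _) (Finset.mem_univ p)
    constructor <;> nlinarith
  have hKc : IsCompact {O : Mat d T | ∀ p q, O p q ∈ Set.Icc (-1:ℝ) 1} := by
    have : {O : Mat d T | ∀ p q, O p q ∈ Set.Icc (-1:ℝ) 1}
        = Set.pi Set.univ (fun _p : Fin T × Fin d =>
            Set.pi Set.univ (fun _q : Fin T × Fin d => Set.Icc (-1:ℝ) 1)) := by
      ext O
      constructor
      · intro h p _ ; intro q _ ; exact h p q
      · intro h p q ; exact h p (Set.mem_univ p) q (Set.mem_univ q)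
    rw [this]
    exact isCompact_univ_pi fun _ => isCompact_univ_pi fun _ => isCompact_Icc
  have hScomp : IsCompact S := hKc.of_isClosed_subset hclosed hsub
  obtain ⟨O₀, hO₀S, hmin⟩ := hScomp.exists_isMinOn hSne hfc.continuousOn
  refine ⟨O₀, hO₀S, le_antisymm ?_ (dABW_le L M hO₀S)⟩
  refine le_csInf ⟨f 1, 1, memO_one, rfl⟩ ?_
  rintro r ⟨O, hO, rfl⟩
  exact hmin hO
end existence


-- ===== extra block-column helpers =====
section colblk
variable {d T : ℕ}

lemma colBlk_transpose_mul (X Y : Mat d T) (t : Fin T) :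
    (colBlk X t)ᵀ * colBlk Y t = blk (Xᵀ * Y) t := by
  ext i j
  rw [Matrix.mul_apply, blk_apply, Matrix.mul_apply]
  rfl

lemma mulVec_blockvec (A : Mat d T) (t : Fin T) (x' : Fin d → ℝ) :
    A *ᵥ (fun p => if p.1 = t then x' p.2 else 0) = colBlk A t *ᵥ x' := by
  ext p
  rw [Matrix.mulVec, dotProduct, Fintype.sum_prod_type]
  rw [Finset.sum_eq_single_of_mem t (Finset.mem_univ t) (fun s _ hs =>
    Finset.sum_eq_zero fun k _ => by simp [hs])]
  simp [colBlk, Matrix.mulVec, dotProduct]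

lemma colBlk_mul_blockdiag (X O : Mat d T)
    (hO : ∀ (t s : Fin T) (i j : Fin d), t ≠ s → O (t, i) (s, j) = 0) (t : Fin T) :
    colBlk (X * O) t = colBlk X t * blk O t := by
  ext p j
  rw [colBlk, Matrix.mul_apply]
  show ∑ q, X p q * O q (t, j) = _
  rw [Fintype.sum_prod_type]
  rw [Finset.sum_eq_single_of_mem t (Finset.mem_univ t) (fun s _ hs =>
    Finset.sum_eq_zero fun k _ => by rw [hO s t k j hs, mul_zero])]
  rw [Matrix.mul_apply]
  rfl

end colblk

/-- if `L ∈ 𝐋^reg` and `d_ABW(L,M)² < min_t λ_min((LᵀL)_{t,t})` (expressed as: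
`d_ABW(L,M)²` is smaller than every eigenvalue of every diagonal block `(LᵀL)_{t,t}`), then
`𝐎*(L,M)` is a singleton. -/
theorem stmt19 (d T : ℕ) (hd : 0 < d) (hT : 0 < T) (L M : Mat d T)
    (hL : L ∈ LReg) (hM : memL M)
    (hsmall : ∀ t : Fin T, ∀ μ : ℝ,
      (∃ x : Fin d → ℝ, x ≠ 0 ∧ (blk (Lᵀ * L) t).mulVec x = μ • x) →
      dABW L M ^ 2 < μ) :
    ∃ P : Mat d T, OStar L M = {P} := by
  classical
  obtain ⟨O₀, hO₀, hO₀min⟩ := exists_opt L M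
  have hOStar : O₀ ∈ OStar L M := ⟨hO₀, hO₀min⟩
  -- global trace maximality of optimizers
  have tracemax : ∀ P, P ∈ OStar L M → ∀ O, memO O →
      (Lᵀ * M * O).trace ≤ (Lᵀ * M * P).trace := by
    intro P hP O hO
    have h1 : frobNorm (L - M * P) ≤ frobNorm (L - M * O) := hP.2 ▸ dABW_le L M hO
    have h2 : frobNorm (L - M * P) ^ 2 ≤ frobNorm (L - M * O) ^ 2 :=
      pow_le_pow_left₀ (frobNorm_nonneg _) h1 2
    rw [expand_sq L M P hP.1, expand_sq L M O hO] at h2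
    linarith
  -- blockwise maximality
  have blockmax : ∀ P, P ∈ OStar L M → ∀ t : Fin T,
      ∀ R : Matrix (Fin d) (Fin d) ℝ, Rᵀ * R = 1 →
      ((blk (Lᵀ * M) t * blk P t) * R).trace ≤ (blk (Lᵀ * M) t * blk P t).trace := by
    intro P hP t R hR
    set F : Fin T → Matrix (Fin d) (Fin d) ℝ := fun s => if s = t then R else 1 with hF
    have hFo : ∀ s, (F s)ᵀ * F s = 1 := fun s => by
      by_cases hst : s = t <;> simp [hF, hst, hR]
    have hO' : memO (P * bdiag F) := memO.mul hP.1 (memO_bdiag F hFo)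
    have h1 := tracemax P hP _ hO'
    rw [← Matrix.mul_assoc (Lᵀ * M) P (bdiag F), trace_mul_bdiag (Lᵀ * M * P) F,
      trace_eq_sum_blk (Lᵀ * M * P)] at h1
    have hblk : ∀ s, blk (Lᵀ * M * P) s = blk (Lᵀ * M) s * blk P s := by
      intro s
      conv_lhs => rw [show Lᵀ * M * P = (Lᵀ * M) * bdiag (fun u => blk P u) by
        rw [← hP.1.eq_bdiag]]
      exact blk_mul_bdiag _ _ s
    have hcomp : ∀ s : Fin T, s ≠ t →
        (blk (Lᵀ * M * P) s * F s).trace = (blk (Lᵀ * M * P) s).trace := by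
      intro s hst
      simp [hF, hst]
    -- extract the t-component from the sum inequality
    have hsumsplit : ∀ g : Fin T → ℝ,
        ∑ s, g s = g t + ∑ s ∈ Finset.univ.erase t, g s := by
      intro g
      rw [← Finset.sum_erase_add _ _ (Finset.mem_univ t)]
      ring
    rw [hsumsplit, hsumsplit (fun s => (blk (Lᵀ * M * P) s).trace)] at h1
    rw [Finset.sum_congr rfl (fun s hs => hcomp s (Finset.ne_of_mem_erase hs))] at h1
    have h2 : (blk (Lᵀ * M * P) t * F t).trace ≤ (blk (Lᵀ * M * P) t).trace := by
      linarith
    rw [hblk t] at h2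
    simpa [hF] using h2
  set c : ℝ := dABW L M with hc
  -- the diagonal blocks of LᵀM are invertible
  have hBdet : ∀ t : Fin T, IsUnit (blk (Lᵀ * M) t).det := by
    intro t
    rw [isUnit_iff_ne_zero]
    intro hdet
    obtain ⟨z, hz, hz0⟩ := Matrix.exists_mulVec_eq_zero_iff.mpr hdet
    set Ot := blk O₀ t with hOtdef
    have hOt : Otᵀ * Ot = 1 := hO₀.blk_orth t
    have hOtc : Ot * Otᵀ = 1 := mul_eq_one_comm.mp hOt
    set x' : Fin d → ℝ := Otᵀ *ᵥ z with hx'def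
    have hOx : Ot *ᵥ x' = z := by
      rw [hx'def, Matrix.mulVec_mulVec, hOtc, Matrix.one_mulVec]
    have hx'ne : x' ≠ 0 := fun h => hz (by rw [← hOx, h, Matrix.mulVec_zero])
    have hx'x' : x' ⬝ᵥ x' = z ⬝ᵥ z := by
      conv_lhs => rw [hx'def]
      rw [Matrix.dotProduct_mulVec x' Otᵀ z, Matrix.vecMul_transpose, hOx]
    set v : Fin T × Fin d → ℝ := fun p => if p.1 = t then x' p.2 else 0 with hv
    set A₀ := L - M * O₀ with hA₀
    have hAv : A₀ *ᵥ v = colBlk L t *ᵥ x' - colBlk M t *ᵥ z := by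
      rw [mulVec_blockvec A₀ t x', hA₀]
      have : colBlk (L - M * O₀) t = colBlk L t - colBlk (M * O₀) t := by
        ext p j; simp [colBlk]
      rw [this, Matrix.sub_mulVec]
      congr 1
      rw [colBlk_mul_blockdiag M O₀ hO₀.1 t, ← Matrix.mulVec_mulVec, hOx]
    set uu := colBlk L t *ᵥ x' with huu
    set ww := colBlk M t *ᵥ z with hww
    have huw : uu ⬝ᵥ ww = 0 := by
      rw [huu, hww, Matrix.dotProduct_mulVec, Matrix.vecMul_mulVec,
        ← Matrix.dotProduct_mulVec, colBlk_transpose_mul, hz0, dotProduct_zero]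
    have huuq : uu ⬝ᵥ uu = x' ⬝ᵥ (blk (Lᵀ * L) t *ᵥ x') := by
      rw [huu, Matrix.dotProduct_mulVec, Matrix.vecMul_mulVec,
        ← Matrix.dotProduct_mulVec, colBlk_transpose_mul]
    have hww0 : 0 ≤ ww ⬝ᵥ ww := Finset.sum_nonneg fun p _ => mul_self_nonneg _
    -- Rayleigh lower bound
    have hray : c ^ 2 * (x' ⬝ᵥ x') < x' ⬝ᵥ (blk (Lᵀ * L) t *ᵥ x') :=
      rayleigh (blk (Lᵀ * L) t) (hL.2 t).1 (c ^ 2) (hsmall t) x' hx'ne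
    -- Cauchy-Schwarz upper bound
    have hCS : ∑ p, ((A₀ *ᵥ v) p) ^ 2 ≤ (∑ p, ∑ q, (A₀ p q) ^ 2) * (∑ q, (v q) ^ 2) := by
      rw [Finset.sum_mul]
      refine Finset.sum_le_sum fun p _ => ?_
      exact Finset.sum_mul_sq_le_sq_mul_sq Finset.univ (fun q => A₀ p q) v
    have hvnorm : ∑ q, (v q) ^ 2 = x' ⬝ᵥ x' := by
      rw [Fintype.sum_prod_type]
      rw [Finset.sum_eq_single_of_mem t (Finset.mem_univ t) (fun s _ hs =>
        Finset.sum_eq_zero fun k _ => by simp [hv, hs])]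
      simp [hv, dotProduct, sq]
    have hfrob : ∑ p, ∑ q, (A₀ p q) ^ 2 = c ^ 2 := by
      rw [← frobNorm_sq, hA₀, hO₀min]
    have hlhs : ∑ p, ((A₀ *ᵥ v) p) ^ 2 = uu ⬝ᵥ uu + ww ⬝ᵥ ww := by
      rw [hAv]
      have : ∀ p, ((uu - ww) p) ^ 2 = (uu p) * (uu p) - 2 * (uu p * ww p)
          + (ww p) * (ww p) := fun p => by simp [Pi.sub_apply]; ring
      simp only [this, Finset.sum_add_distrib, Finset.sum_sub_distrib, ← Finset.mul_sum]
      have huw2 : ∑ p, uu p * ww p = 0 := huw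
      rw [huw2]
      rw [dotProduct, dotProduct]
      ring
    rw [hvnorm, hfrob, hlhs] at hCS
    have : x' ⬝ᵥ (blk (Lᵀ * L) t *ᵥ x') ≤ c ^ 2 * (x' ⬝ᵥ x') := by
      rw [← huuq] at *
      linarith
    linarith
  -- uniqueness
  have huniq : ∀ P Q, P ∈ OStar L M → Q ∈ OStar L M → P = Q := by
    intro P Q hP hQ
    have hblkPQ : ∀ t, blk P t = blk Q t := by
      intro t
      have hPo : (blk P t)ᵀ * blk P t = 1 := hP.1.blk_orth t
      have hQo : (blk Q t)ᵀ * blk Q t = 1 := hQ.1.blk_orth t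
      have hQoc : blk Q t * (blk Q t)ᵀ = 1 := mul_eq_one_comm.mp hQo
      have hPoc : blk P t * (blk P t)ᵀ = 1 := mul_eq_one_comm.mp hPo
      set B := blk (Lᵀ * M) t with hB
      set SQ := B * blk Q t with hSQ
      have hmaxQ : ∀ R : Matrix (Fin d) (Fin d) ℝ, Rᵀ * R = 1 →
          (SQ * R).trace ≤ SQ.trace := blockmax Q hQ t
      have hmaxP := blockmax P hP t
      have hsym : SQᵀ = SQ := max_sym SQ hmaxQ
      have hpsd : SQ.PosSemidef := by
        refine Matrix.PosSemidef.of_dotProduct_mulVec_nonneg ?_ fun x => by simpa using max_psd SQ hmaxQ (star x)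
        rw [Matrix.IsHermitian, conjTranspose_eq_transpose_of_trivial]
        exact hsym
      have hdetQorth : IsUnit (blk Q t).det := by
        have : (blk Q t).det * (blk Q t).det = 1 := by
          rw [show (blk Q t).det * (blk Q t).det = ((blk Q t)ᵀ * blk Q t).det by
            rw [Matrix.det_mul, Matrix.det_transpose], hQo, Matrix.det_one]
        exact IsUnit.of_mul_eq_one _ this
      have hdetQ : IsUnit SQ.det := by
        rw [hSQ, Matrix.det_mul]
        exact (hBdet t).mul hdetQorth
      set R := (blk Q t)ᵀ * blk P t with hRdef
      have hR : Rᵀ * R = 1 := by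
        rw [hRdef, Matrix.transpose_mul, Matrix.transpose_transpose, Matrix.mul_assoc,
          ← Matrix.mul_assoc (blk Q t), hQoc, Matrix.one_mul, hPo]
      have e1 : SQ * R = B * blk P t := by
        rw [hSQ, hRdef, Matrix.mul_assoc, ← Matrix.mul_assoc (blk Q t), hQoc, Matrix.one_mul]
      have htreq : (SQ * R).trace = SQ.trace := by
        refine le_antisymm (hmaxQ R hR) ?_
        have hR' : ((blk P t)ᵀ * blk Q t)ᵀ * ((blk P t)ᵀ * blk Q t) = 1 := by
          rw [Matrix.transpose_mul, Matrix.transpose_transpose, Matrix.mul_assoc,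
            ← Matrix.mul_assoc (blk P t), hPoc, Matrix.one_mul, hQo]
        have h4 := hmaxP _ hR'
        have e2 : B * blk P t * ((blk P t)ᵀ * blk Q t) = SQ := by
          rw [hSQ, Matrix.mul_assoc, ← Matrix.mul_assoc (blk P t), hPoc, Matrix.one_mul]
        rw [e2] at h4
        rw [e1]
        exact h4
      have hR1 : R = 1 := eq_one_of_trace_eq hpsd hdetQ hR htreq
      calc blk P t = (blk Q t * (blk Q t)ᵀ) * blk P t := by rw [hQoc, Matrix.one_mul]
      _ = blk Q t * R := by rw [Matrix.mul_assoc, hRdef]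
      _ = blk Q t := by rw [hR1, Matrix.mul_one]
    have hfam : (fun t => blk P t) = (fun t => blk Q t) := funext hblkPQ
    rw [hP.1.eq_bdiag, hQ.1.eq_bdiag, hfam]
  exact ⟨O₀, Set.eq_singleton_iff_unique_mem.mpr ⟨hOStar, fun P hP => huniq P O₀ hP hOStar⟩⟩
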